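/- Let λ ≠ 0, μ real, η ∈ ℝ² nonzero, η* = θη, A(u) = λI + (μ-u)θ, v(u) = -uA(u)⁻¹η, and B = {v : |v + η*| ≤ √((λ²+μ²)/λ²)|η|}. If w lies in the closure of ℝ² \ B, w ≠ v(u), and λs > 0, then |e^{sA(u)}(w - v(u)) + v(u) + η*| > |w + η*|. -/

import Mathlib

noncomputable section
open Real Matrix

def toV (x : Fin 2 → ℝ) : EuclideanSpace ℝ (Fin 2) := WithLp.toLp 2 x

def th : Matrix (Fin 2) (Fin 2) ℝ := !![0, -1; 1, 0]

lemma expaux {x : ℝ} (hx : 0 < x) : x ^ 2 * Real.exp x < (Real.exp x - 1) ^ 2 := by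
  have h1 : x / 2 < Real.sinh (x / 2) := Real.self_lt_sinh_iff.2 (by linarith)
  have h2 : Real.exp (x/2) * Real.exp (x/2) = Real.exp x := by
    rw [← Real.exp_add]; ring_nf
  have h3 : Real.exp (x/2) * Real.exp (-(x/2)) = 1 := by
    rw [← Real.exp_add]; simp
  have h4 : x * Real.exp (x/2) < Real.exp x - 1 := by
    have := mul_lt_mul_of_pos_right h1 (Real.exp_pos (x/2))
    rw [Real.sinh_eq] at this
    nlinarith [this, h2, h3]
  have h5 : (x * Real.exp (x/2))^2 < (Real.exp x - 1)^2 :=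
    pow_lt_pow_left₀ h4 (by positivity) two_ne_zero
  nlinarith [h5, h2]

lemma key (x y : ℝ) (hx : 0 < x) (R : ℝ) (hR : 0 < R) (P B : ℂ)
    (hP : R ≤ ‖P‖) (hB : ‖B‖ = R * x / Real.sqrt (x ^ 2 + y ^ 2))
    (hPB : P ≠ B) :
    ‖P‖ < ‖Complex.exp ⟨x, y⟩ * (P - B) + B‖ := by
  have hex : 1 < Real.exp x := by
    rw [show (1:ℝ) = Real.exp 0 by simp]; exact Real.exp_lt_exp.2 hx
  by_cases hy : y = 0
  · -- real case
    subst hy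
    have hsq : Real.sqrt (x ^ 2 + 0 ^ 2) = x := by
      rw [show x^2 + 0^2 = x^2 by ring, Real.sqrt_sq hx.le]
    have hBR : ‖B‖ = R := by
      rw [hB, hsq]; field_simp
    have hez : (Complex.exp ⟨x, 0⟩ : ℂ) = ((Real.exp x : ℝ) : ℂ) := by
      rw [Complex.mk_eq_add_mul_I, Complex.ofReal_exp]; norm_num
    rw [hez]
    have hBP : Complex.normSq B ≤ Complex.normSq P := by
      have : ‖B‖ ≤ ‖P‖ := by rw [hBR]; exact hP
      have := pow_le_pow_left₀ (norm_nonneg B) this 2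
      rwa [Complex.sq_norm, Complex.sq_norm] at this
    have hq : 0 < Complex.normSq (P - B) :=
      Complex.normSq_pos.2 (sub_ne_zero.2 hPB)
    have hlt : Complex.normSq P < Complex.normSq ((Real.exp x : ℂ) * (P - B) + B) := by
      simp only [Complex.normSq_apply, Complex.add_re, Complex.add_im, Complex.mul_re,
        Complex.mul_im, Complex.sub_re, Complex.sub_im, Complex.ofReal_re,
        Complex.ofReal_im] at hBP hq ⊢
      have hBPsub : 0 ≤ (P.re * P.re + P.im * P.im) - (B.re * B.re + B.im * B.im) := by
        linarith
      nlinarith [mul_pos (mul_pos (sub_pos.2 hex) (show (0:ℝ) < Real.exp x from by positivity)) hq,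
        mul_nonneg (sub_pos.2 hex).le hBPsub]
    have := Real.sqrt_lt_sqrt (Complex.normSq_nonneg P) hlt
    rwa [← Complex.norm_def, ← Complex.norm_def] at this
  · -- rotating case
    have hy2 : 0 < y ^ 2 := by positivity
    have hS : 0 < Real.sqrt (x ^ 2 + y ^ 2) := Real.sqrt_pos.2 (by positivity)
    set ζ := Complex.exp ⟨x, y⟩ with hζ
    have habsζ : ‖ζ‖ = Real.exp x := by
      rw [hζ, Complex.norm_exp]
    have key2 : ‖ζ - 1‖ * x < (Real.exp x - 1) * Real.sqrt (x ^ 2 + y ^ 2) := by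
      have hL : 0 ≤ ‖ζ - 1‖ * x := by positivity
      refine lt_of_pow_lt_pow_left₀ 2 (mul_nonneg (by linarith) hS.le) ?_
      have hss : Real.sqrt (x ^ 2 + y ^ 2) ^ 2 = x ^ 2 + y ^ 2 :=
        Real.sq_sqrt (by positivity)
      have habs2 : ‖ζ - 1‖ ^ 2 =
          (Real.exp x * Real.cos y - 1) ^ 2 + (Real.exp x * Real.sin y) ^ 2 := by
        rw [Complex.sq_norm, Complex.normSq_apply, Complex.sub_re, Complex.sub_im,
          Complex.one_re, Complex.one_im]
        have hre : ζ.re = Real.exp x * Real.cos y := by rw [hζ, Complex.exp_re]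
        have him : ζ.im = Real.exp x * Real.sin y := by rw [hζ, Complex.exp_im]
        rw [hre, him]; ring
      rw [mul_pow, mul_pow, habs2, hss]
      have hcos : 1 - y ^ 2 / 2 ≤ Real.cos y := Real.one_sub_sq_div_two_le_cos
      have hsc : Real.sin y ^ 2 + Real.cos y ^ 2 = 1 := Real.sin_sq_add_cos_sq y
      have h5 := expaux hx
      have h6 : 2 * Real.exp x * (1 - Real.cos y) * x ^ 2 ≤ Real.exp x * y ^ 2 * x ^ 2 := by
        nlinarith [mul_le_mul_of_nonneg_left hcos
          (show (0:ℝ) ≤ 2 * Real.exp x * x ^ 2 by positivity)]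
      have h7 : Real.exp x * y ^ 2 * x ^ 2 < (Real.exp x - 1) ^ 2 * y ^ 2 := by
        nlinarith [mul_lt_mul_of_pos_right h5 hy2]
      have e1 : (Real.exp x * Real.cos y - 1) ^ 2 + (Real.exp x * Real.sin y) ^ 2 =
          (Real.exp x - 1) ^ 2 + 2 * Real.exp x * (1 - Real.cos y) := by
        linear_combination (Real.exp x) ^ 2 * hsc
      nlinarith [h6, h7, e1]
    have hB' : ‖ζ - 1‖ * ‖B‖ < (Real.exp x - 1) * R := by
      rw [hB]
      calc ‖ζ - 1‖ * (R * x / Real.sqrt (x ^ 2 + y ^ 2))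
          = (‖ζ - 1‖ * x) * (R / Real.sqrt (x ^ 2 + y ^ 2)) := by ring
        _ < ((Real.exp x - 1) * Real.sqrt (x ^ 2 + y ^ 2)) * (R / Real.sqrt (x ^ 2 + y ^ 2)) := by
            exact mul_lt_mul_of_pos_right key2 (div_pos hR hS)
        _ = (Real.exp x - 1) * R := by field_simp
    have htri : Real.exp x * ‖P‖ - ‖ζ - 1‖ * ‖B‖ ≤
        ‖ζ * (P - B) + B‖ := by
      have : ζ * (P - B) + B = ζ * P - (ζ - 1) * B := by ring
      rw [this]
      have := norm_sub_norm_le (ζ * P) ((ζ - 1) * B)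
      simpa [_root_.map_mul, habsζ] using this
    have hPp : R ≤ ‖P‖ := hP
    have := mul_le_mul_of_nonneg_left hPp (sub_nonneg.2 hex.le)
    linarith [htri, hB', this]

def psi (w : Fin 2 → ℝ) : ℂ := ⟨w 0, w 1⟩

lemma th_mul_th : th * th = -1 := by
  rw [th, Matrix.mul_fin_two]
  ext i j
  fin_cases i <;> fin_cases j <;> norm_num [Matrix.one_apply]

def phi : ℂ →ₐ[ℝ] Matrix (Fin 2) (Fin 2) ℝ := Complex.liftAux th th_mul_th

lemma phi_apply (z : ℂ) : phi z = !![z.re, -z.im; z.im, z.re] := by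
  rw [phi, Complex.liftAux_apply]
  ext i j
  fin_cases i <;> fin_cases j <;>
    simp [th, Matrix.algebraMap_matrix_apply, Matrix.one_apply]

lemma phi_mulVec (z : ℂ) (w : Fin 2 → ℝ) :
    (phi z).mulVec w = ![(z * psi w).re, (z * psi w).im] := by
  rw [phi_apply]
  ext i
  fin_cases i <;>
    simp [Matrix.mulVec, dotProduct, Fin.sum_univ_two, psi,
      Complex.mul_re, Complex.mul_im] <;> ring

lemma psi_pair (r : ℂ) : psi ![r.re, r.im] = r := by
  apply Complex.ext <;> simp [psi]

lemma psi_add (a b : Fin 2 → ℝ) : psi (a + b) = psi a + psi b := by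
  apply Complex.ext <;> simp [psi]

lemma psi_sub (a b : Fin 2 → ℝ) : psi (a - b) = psi a - psi b := by
  apply Complex.ext <;> simp [psi]

lemma psi_smul (r : ℝ) (a : Fin 2 → ℝ) : psi (r • a) = (r : ℂ) * psi a := by
  apply Complex.ext <;> simp [psi]

lemma psi_ne_zero {a : Fin 2 → ℝ} (ha : a ≠ 0) : psi a ≠ 0 := by
  intro h
  apply ha
  have h0 : a 0 = 0 := congrArg Complex.re h
  have h1 : a 1 = 0 := congrArg Complex.im h
  funext i; fin_cases i <;> simpa

lemma norm_toV (w : Fin 2 → ℝ) : ‖toV w‖ = ‖psi w‖ := by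
  rw [toV, EuclideanSpace.norm_eq, Complex.norm_def, Complex.normSq_mk]
  simp [Fin.sum_univ_two, Real.norm_eq_abs, sq_abs, psi]
  ring_nf

lemma exp_phi (z : ℂ) : NormedSpace.exp (phi z) = phi (Complex.exp z) := by
  letI : SeminormedRing (Matrix (Fin 2) (Fin 2) ℝ) := Matrix.linftyOpSemiNormedRing
  letI : NormedRing (Matrix (Fin 2) (Fin 2) ℝ) := Matrix.linftyOpNormedRing
  letI : NormedAlgebra ℝ (Matrix (Fin 2) (Fin 2) ℝ) := Matrix.linftyOpNormedAlgebra
  have hcont : Continuous phi := phi.toLinearMap.continuous_of_finiteDimensional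
  rw [Complex.exp_eq_exp_ℂ]; exact (NormedSpace.map_exp phi hcont z).symm

/-- Let `λ ≠ 0`, `η ≠ 0`, `η* = θη`, `A(u) = λI + (μ-u)θ`, `v(u) = -uA(u)⁻¹η` and
`B = {v : |v + η*| ≤ √((λ²+μ²)/λ²)|η|}`. If `w` lies in the closure of `ℝ² \ B`
(i.e. `|w + η*| ≥ √((λ²+μ²)/λ²)|η|`), `w ≠ v(u)` and `λs > 0`, then
`|e^{sA(u)}(w - v(u)) + v(u) + η*| > |w + η*|`. -/
theorem stmt11 (lam mu : ℝ) (hlam : lam ≠ 0) (eta : Fin 2 → ℝ) (heta : eta ≠ 0)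
    (A : ℝ → Matrix (Fin 2) (Fin 2) ℝ)
    (hA : ∀ u, A u = lam • (1 : Matrix (Fin 2) (Fin 2) ℝ) + (mu - u) • th)
    (v : ℝ → Fin 2 → ℝ) (hv : ∀ u, v u = (-u) • ((A u)⁻¹.mulVec eta))
    (etaStar : Fin 2 → ℝ) (hetaStar : etaStar = th.mulVec eta)
    (u s : ℝ) (hs : lam * s > 0) (w : Fin 2 → ℝ)
    (hw : ‖toV (w + etaStar)‖ ≥ Real.sqrt ((lam ^ 2 + mu ^ 2) / lam ^ 2) * ‖toV eta‖)
    (hwv : w ≠ v u) :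
    ‖toV ((NormedSpace.exp (s • A u)).mulVec (w - v u) + v u + etaStar)‖ >
      ‖toV (w + etaStar)‖ := by
  set c : ℝ := mu - u with hc
  set z : ℂ := ⟨lam, c⟩ with hzdef
  have hz : z ≠ 0 := by
    intro h
    exact hlam (congrArg Complex.re h)
  have hAphi : A u = phi z := by
    rw [hA u, phi_apply]
    ext i j
    fin_cases i <;> fin_cases j <;>
      simp [th, Matrix.one_apply] <;> linarith [hc]
  have hAinv : (A u)⁻¹ = phi z⁻¹ :=
    Matrix.inv_eq_right_inv (by rw [hAphi, ← _root_.map_mul, mul_inv_cancel₀ hz, _root_.map_one])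
  have hψv : psi (v u) = (-u : ℂ) * (z⁻¹ * psi eta) := by
    rw [hv u, hAinv, psi_smul, phi_mulVec, psi_pair]
    push_cast
    ring
  have hthI : th = phi Complex.I := (Complex.liftAux_apply_I th th_mul_th).symm
  have hψstar : psi etaStar = Complex.I * psi eta := by
    rw [hetaStar, hthI, phi_mulVec, psi_pair]
  -- the exponential
  have hsmul : s • A u = phi ((s : ℂ) * z) := by
    rw [hAphi, ← Complex.real_smul]
    exact (phi.toLinearMap.map_smul s z).symm
  have hexp : NormedSpace.exp (s • A u) = phi (Complex.exp ((s : ℂ) * z)) := by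
    rw [hsmul, exp_phi]
  have hsz : (s : ℂ) * z = ⟨s * lam, s * c⟩ := by
    apply Complex.ext <;> simp [hzdef, Complex.mul_re, Complex.mul_im]
  set P : ℂ := psi w + Complex.I * psi eta with hPdef
  set B : ℂ := psi (v u) + Complex.I * psi eta with hBdef
  have hψwstar : psi (w + etaStar) = P := by rw [psi_add, hψstar]
  have hψgoal : psi ((NormedSpace.exp (s • A u)).mulVec (w - v u) + v u + etaStar) =
      Complex.exp ⟨s * lam, s * c⟩ * (P - B) + B := by
    rw [psi_add, psi_add, hexp, phi_mulVec, psi_pair, hψstar, psi_sub, hsz, hPdef, hBdef]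
    ring
  rw [norm_toV, norm_toV, hψwstar, hψgoal]
  -- apply the key lemma
  have hx : 0 < s * lam := by linarith [hs]
  have hs0 : s ≠ 0 := by rintro rfl; simp at hs
  have heabs : 0 < ‖psi eta‖ := by
    simpa using (norm_pos_iff.2 (psi_ne_zero heta))
  set R : ℝ := Real.sqrt ((lam ^ 2 + mu ^ 2) / lam ^ 2) * ‖psi eta‖ with hRdef
  have hR : 0 < R := by
    apply mul_pos _ heabs
    apply Real.sqrt_pos.2
    positivity
  have hP : R ≤ ‖P‖ := by
    rw [norm_toV, norm_toV, hψwstar] at hw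
    exact hw
  have hPB : P ≠ B := by
    intro h
    apply hwv
    have : psi (w - v u) = 0 := by
      rw [psi_sub]
      have : psi w - psi (v u) = P - B := by rw [hPdef, hBdef]; ring
      rw [this, h, sub_self]
    by_contra hne
    exact psi_ne_zero (sub_ne_zero.2 hne) this
  -- compute |B|
  have hBfact : B = (⟨-mu, lam⟩ : ℂ) * z⁻¹ * psi eta := by
    have hzz : z * z⁻¹ = 1 := mul_inv_cancel₀ hz
    have hmk : (⟨-mu, lam⟩ : ℂ) = (-u : ℂ) + Complex.I * z := by
      apply Complex.ext <;> simp [hzdef, Complex.mul_re, Complex.mul_im] <;> linarith [hc]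
    rw [hBdef, hψv, hmk]
    linear_combination (-(Complex.I * psi eta)) * hzz
  have e1 : ‖(⟨-mu, lam⟩ : ℂ)‖ = Real.sqrt (lam ^ 2 + mu ^ 2) := by
    rw [Complex.norm_def, Complex.normSq_mk]
    ring_nf
  have e2 : ‖z‖ = Real.sqrt (lam ^ 2 + c ^ 2) := by
    rw [Complex.norm_def, Complex.normSq_mk]
    ring_nf
  have hlc : (0:ℝ) < Real.sqrt (lam ^ 2 + c ^ 2) := Real.sqrt_pos.2 (by positivity)
  have e3 : Real.sqrt ((lam ^ 2 + mu ^ 2) / lam ^ 2) =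
      Real.sqrt (lam ^ 2 + mu ^ 2) / |lam| := by
    rw [Real.sqrt_div (by positivity), Real.sqrt_sq_eq_abs]
  have e4 : Real.sqrt ((s * lam) ^ 2 + (s * c) ^ 2) = |s| * Real.sqrt (lam ^ 2 + c ^ 2) := by
    rw [show (s * lam) ^ 2 + (s * c) ^ 2 = s ^ 2 * (lam ^ 2 + c ^ 2) by ring,
      Real.sqrt_mul (sq_nonneg s), Real.sqrt_sq_eq_abs]
  have hsl : s * lam = |s| * |lam| := by
    rw [← abs_mul, abs_of_pos hx]
  have hB : ‖B‖ = R * (s * lam) / Real.sqrt ((s * lam) ^ 2 + (s * c) ^ 2) := by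
    rw [hBfact, norm_mul, norm_mul, norm_inv, e1, e2, e4, hRdef, e3, hsl]
    have h1 : |s| ≠ 0 := by simpa using hs0
    have h2 : |lam| ≠ 0 := by simpa using hlam
    field_simp
  exact key (s * lam) (s * c) hx R hR P B hP hB hPB
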